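/- Let n, m ≥ 1, let M ∈ ℝ^{n×n}, let ṽ ∈ ℝⁿ be nonzero, λ̃ ∈ ℝ, let f₁,…,f_m ∈ ℝ and weights w₁,…,w_m ≥ 0 with Σᵢ₌₁ᵐ |fᵢ| wᵢ > 0, and set r = Mṽ − λ̃ṽ. Consider the set T = { |ε| : ε ∈ ℝ and there exist E₁,…,E_m ∈ ℝ^{n×n} with ‖Eᵢ‖₂ ≤ wᵢ for all i such that (M + ε Σᵢ₌₁ᵐ fᵢ Eᵢ) ṽ = λ̃ ṽ }. Then ‖r‖ / ((Σᵢ₌₁ᵐ |fᵢ| wᵢ) ‖ṽ‖) is the least element of T: it is a lower bound for T and it belongs to T (attained, e.g., by Eᵢ = −sign(fᵢ) wᵢ rṽᵀ/(‖r‖‖ṽ‖) when r ≠ 0). -/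

import Mathlib

open Matrix

/-- Euclidean norm of a vector in `ℝⁿ`. -/
noncomputable def e2norm {n : ℕ} (v : Fin n → ℝ) : ℝ := Real.sqrt (∑ i, v i ^ 2)

/-- Frobenius norm of a real matrix. -/
noncomputable def frobNorm {n m : ℕ} (M : Matrix (Fin n) (Fin m) ℝ) : ℝ :=
  Real.sqrt (∑ i, ∑ j, M i j ^ 2)

/-- Spectral norm: the supremum of `‖M x‖` over Euclidean-unit vectors `x`. -/
noncomputable def specNorm {n m : ℕ} (M : Matrix (Fin n) (Fin m) ℝ) : ℝ :=
  sSup ((fun x => e2norm (M.mulVec x)) '' {x : Fin m → ℝ | e2norm x = 1})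

noncomputable def toE {n : ℕ} (v : Fin n → ℝ) : EuclideanSpace ℝ (Fin n) :=
  (WithLp.equiv 2 (Fin n → ℝ)).symm v

lemma e2norm_eq {n : ℕ} (v : Fin n → ℝ) : e2norm v = ‖toE v‖ := by
  rw [EuclideanSpace.norm_eq]
  simp [e2norm, toE, Real.norm_eq_abs, sq_abs]

lemma e2norm_nonneg {n : ℕ} (v : Fin n → ℝ) : 0 ≤ e2norm v := Real.sqrt_nonneg _

lemma toE_smul {n : ℕ} (c : ℝ) (v : Fin n → ℝ) : toE (c • v) = c • toE v := rfl

lemma toE_sum {n : ℕ} {ι : Type*} (s : Finset ι) (u : ι → Fin n → ℝ) :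
    toE (∑ i ∈ s, u i) = ∑ i ∈ s, toE (u i) := by
  simp only [toE]
  exact WithLp.toLp_sum (p := 2) (s := s) (f := u)

lemma e2norm_smul {n : ℕ} (c : ℝ) (v : Fin n → ℝ) : e2norm (c • v) = |c| * e2norm v := by
  rw [e2norm_eq, e2norm_eq, toE_smul]
  exact_mod_cast norm_smul c (toE v)

lemma e2norm_eq_zero {n : ℕ} (v : Fin n → ℝ) : e2norm v = 0 ↔ v = 0 := by
  rw [e2norm_eq, norm_eq_zero]
  constructor
  · intro h; funext i; exact congrFun (congrArg (WithLp.equiv 2 (Fin n → ℝ)) h) i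
  · intro h; rw [h]; rfl

lemma e2norm_sum_le {n : ℕ} {ι : Type*} (s : Finset ι) (u : ι → Fin n → ℝ) :
    e2norm (∑ i ∈ s, u i) ≤ ∑ i ∈ s, e2norm (u i) := by
  simp only [e2norm_eq, toE_sum]
  exact norm_sum_le s (fun i => toE (u i))

lemma e2norm_cs {n : ℕ} (v x : Fin n → ℝ) : |∑ i, v i * x i| ≤ e2norm v * e2norm x := by
  have := abs_real_inner_le_norm (toE v) (toE x)
  rw [e2norm_eq, e2norm_eq]
  simpa [PiLp.inner_apply, toE, mul_comm] using this

lemma unit_exists {n : ℕ} (hn : 1 ≤ n) : ∃ x : Fin n → ℝ, e2norm x = 1 := by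
  refine ⟨Pi.single ⟨0, hn⟩ 1, ?_⟩
  simp [e2norm, Pi.single_apply]

lemma frob_bound {n m : ℕ} (E : Matrix (Fin n) (Fin m) ℝ) (x : Fin m → ℝ) :
    e2norm (E.mulVec x) ≤ frobNorm E * e2norm x := by
  rw [e2norm, frobNorm, e2norm, ← Real.sqrt_mul (by positivity)]
  apply Real.sqrt_le_sqrt
  rw [Finset.sum_mul]
  apply Finset.sum_le_sum
  intro i _
  simpa [mulVec, dotProduct] using Finset.sum_mul_sq_le_sq_mul_sq Finset.univ (fun j => E i j) x

lemma spec_bddAbove {n m : ℕ} (E : Matrix (Fin n) (Fin m) ℝ) :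
    BddAbove ((fun x => e2norm (E.mulVec x)) '' {x : Fin m → ℝ | e2norm x = 1}) := by
  refine ⟨frobNorm E, ?_⟩
  rintro t ⟨x, hx, rfl⟩
  have := frob_bound E x
  rw [hx, mul_one] at this
  exact this

lemma le_specNorm {n m : ℕ} (E : Matrix (Fin n) (Fin m) ℝ) (v : Fin m → ℝ) :
    e2norm (E.mulVec v) ≤ specNorm E * e2norm v := by
  by_cases hv : v = 0
  · subst hv
    simp [Matrix.mulVec_zero, e2norm]
  · have hb : 0 < e2norm v :=
      lt_of_le_of_ne (e2norm_nonneg v) (fun h => hv ((e2norm_eq_zero v).1 h.symm))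
    set b := e2norm v with hbdef
    set x := b⁻¹ • v with hx
    have hxu : e2norm x = 1 := by
      rw [hx, e2norm_smul, abs_of_pos (inv_pos.2 hb), inv_mul_cancel₀ (ne_of_gt hb)]
    have hmem : e2norm (E.mulVec x) ≤ specNorm E :=
      le_csSup (spec_bddAbove E) ⟨x, hxu, rfl⟩
    have hvx : v = b • x := by rw [hx, smul_inv_smul₀ (ne_of_gt hb)]
    calc e2norm (E.mulVec v) = e2norm (b • E.mulVec x) := by
          rw [hvx, Matrix.mulVec_smul]
      _ = b * e2norm (E.mulVec x) := by rw [e2norm_smul, abs_of_pos hb]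
      _ ≤ b * specNorm E := by nlinarith
      _ = specNorm E * b := mul_comm _ _

lemma specNorm_le {n m : ℕ} (hm : 1 ≤ m) (E : Matrix (Fin n) (Fin m) ℝ) {c : ℝ}
    (h : ∀ x, e2norm x = 1 → e2norm (E.mulVec x) ≤ c) : specNorm E ≤ c := by
  apply csSup_le
  · obtain ⟨x, hx⟩ := unit_exists hm
    exact ⟨_, ⟨x, hx, rfl⟩⟩
  · rintro t ⟨x, hx, rfl⟩
    exact h x hx

lemma sum_mulVec' {n m : ℕ} {ι : Type*} (s : Finset ι) (A : ι → Matrix (Fin n) (Fin m) ℝ)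
    (v : Fin m → ℝ) : (∑ i ∈ s, A i).mulVec v = ∑ i ∈ s, (A i).mulVec v := by
  funext j
  simp [Matrix.mulVec, dotProduct, Matrix.sum_apply, Finset.sum_mul]
  rw [Finset.sum_comm]

/-- the backward error of an approximate eigenpair `(λ̃, ṽ)`:
`‖r‖ / ((Σᵢ |fᵢ| wᵢ) ‖ṽ‖)` is the least `|ε|` such that
`(M + ε Σᵢ fᵢ Eᵢ) ṽ = λ̃ ṽ` for some `‖Eᵢ‖₂ ≤ wᵢ`. -/
theorem backward_error_formula
    {n m : ℕ} (hn : 1 ≤ n) (hm : 1 ≤ m)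
    (M : Matrix (Fin n) (Fin n) ℝ)
    (v : Fin n → ℝ) (hv : v ≠ 0) (lam : ℝ)
    (f w : Fin m → ℝ) (hw : ∀ i, 0 ≤ w i)
    (hpos : 0 < ∑ i, |f i| * w i)
    (r : Fin n → ℝ) (hr : r = M.mulVec v - lam • v) :
    IsLeast
      {t : ℝ | ∃ ε : ℝ, ∃ E : Fin m → Matrix (Fin n) (Fin n) ℝ,
        (∀ i, specNorm (E i) ≤ w i) ∧
        (M + ε • ∑ i, f i • E i).mulVec v = lam • v ∧ t = |ε|}
      (e2norm r / ((∑ i, |f i| * w i) * e2norm v)) := by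
  set S : ℝ := ∑ i, |f i| * w i with hS
  have hb : 0 < e2norm v :=
    lt_of_le_of_ne (e2norm_nonneg v) (fun h => hv ((e2norm_eq_zero v).1 h.symm))
  set b : ℝ := e2norm v with hbdef
  have hSb : 0 < S * b := mul_pos hpos hb
  constructor
  · -- membership
    by_cases hr0 : r = 0
    · refine ⟨0, fun _ => 0, ?_, ?_, ?_⟩
      · intro i
        apply specNorm_le hn
        intro x hx
        simpa [Matrix.zero_mulVec, e2norm] using hw i
      · have h0 : M.mulVec v - lam • v = 0 := by rw [← hr, hr0]
        have hMv : M.mulVec v = lam • v := by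
          linear_combination (norm := module) h0
        simpa using hMv
      · simp [hr0, e2norm]
    · have ha : 0 < e2norm r :=
        lt_of_le_of_ne (e2norm_nonneg r) (fun h => hr0 ((e2norm_eq_zero r).1 h.symm))
      set a : ℝ := e2norm r with hadef
      set R : Matrix (Fin n) (Fin n) ℝ := Matrix.of fun i j => r i * v j with hR
      have hRmul : ∀ x : Fin n → ℝ, R.mulVec x = (∑ j, v j * x j) • r := by
        intro x
        funext i
        simp only [hR, Matrix.mulVec, dotProduct, Matrix.of_apply, Pi.smul_apply,
          smul_eq_mul, Finset.sum_mul]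
        exact Finset.sum_congr rfl (fun j _ => by ring)
      set d : Fin m → ℝ := fun i => if f i = 0 then 0 else -(|f i| / f i) * w i / (a * b)
        with hd
      have hdabs : ∀ i, |d i| ≤ w i / (a * b) := by
        intro i
        by_cases hfi : f i = 0
        · have h0 : d i = 0 := by simp [hd, hfi]
          rw [h0, abs_zero]
          exact div_nonneg (hw i) (mul_pos ha hb).le
        · have : |d i| = w i / (a * b) := by
            rw [hd]
            simp only [hfi, if_false]
            rw [abs_div, abs_mul, abs_neg, abs_div, abs_abs,
              div_self (abs_ne_zero.2 hfi), one_mul, abs_of_nonneg (hw i),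
              abs_of_pos (mul_pos ha hb)]
          rw [this]
      set E : Fin m → Matrix (Fin n) (Fin n) ℝ := fun i => d i • R with hE
      set ε : ℝ := a / (S * b) with hε
      have hεnn : 0 ≤ ε := le_of_lt (div_pos ha hSb)
      refine ⟨ε, E, ?_, ?_, ?_⟩
      · intro i
        apply specNorm_le hn
        intro x hx
        have h1 : (E i).mulVec x = (d i * ∑ j, v j * x j) • r := by
          rw [hE]
          simp only
          rw [Matrix.smul_mulVec, hRmul, smul_smul]
        rw [h1, e2norm_smul, abs_mul]
        have hcs : |∑ j, v j * x j| ≤ b := by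
          have := e2norm_cs v x
          rwa [hx, mul_one] at this
        have h4 : (0:ℝ) ≤ w i / (a * b) := div_nonneg (hw i) (mul_pos ha hb).le
        calc |d i| * |∑ j, v j * x j| * a ≤ (w i / (a * b)) * b * a :=
              mul_le_mul_of_nonneg_right
                (mul_le_mul (hdabs i) hcs (abs_nonneg _) h4) ha.le
          _ = w i * ((b * a) / (a * b)) := by ring
          _ = w i := by
              rw [mul_comm b a, div_self (mul_ne_zero ha.ne' hb.ne'), mul_one]
      · have hsum : (∑ i, f i • E i) = (-S / (a * b)) • R := by
          have hfd : ∀ i, f i • E i = (-(|f i| * w i) / (a * b)) • R := by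
            intro i
            rw [hE]
            simp only
            rw [smul_smul]
            congr 1
            by_cases hfi : f i = 0
            · simp [hd, hfi]
            · rw [hd]
              simp only [hfi, if_false]
              field_simp
          rw [Finset.sum_congr rfl (fun i _ => hfd i), ← Finset.sum_smul]
          congr 1
          rw [← Finset.sum_div, Finset.sum_neg_distrib, neg_div]
        have hvv : (∑ j, v j * v j) = b ^ 2 := by
          rw [hbdef, e2norm, Real.sq_sqrt (by positivity)]
          exact Finset.sum_congr rfl (fun j _ => (sq (v j)).symm)
        have hmv : (M + ε • ∑ i, f i • E i).mulVec v
            = M.mulVec v + (ε * (-S / (a * b)) * b ^ 2) • r := by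
          rw [hsum, Matrix.add_mulVec, smul_smul, Matrix.smul_mulVec, hRmul,
            smul_smul, hvv]
        have hc : ε * (-S / (a * b)) * b ^ 2 = -1 := by
          rw [hε]
          field_simp
        rw [hmv, hc, hr]
        module
      · rw [abs_of_nonneg hεnn, hε, hadef, hbdef, hS]
  · -- lower bound
    rintro t ⟨ε, E, hEw, heq, rfl⟩
    have h1 : M.mulVec v + ε • (∑ i, f i • E i).mulVec v = lam • v := by
      rw [← Matrix.smul_mulVec, ← Matrix.add_mulVec]
      exact heq
    have hrε : r = (-ε) • (∑ i, f i • E i).mulVec v := by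
      rw [hr]
      linear_combination (norm := module) h1
    have hNv : e2norm ((∑ i, f i • E i).mulVec v) ≤ S * b := by
      rw [sum_mulVec']
      calc e2norm (∑ i, (f i • E i).mulVec v)
          ≤ ∑ i, e2norm ((f i • E i).mulVec v) := e2norm_sum_le _ _
        _ ≤ ∑ i, |f i| * w i * b := by
            apply Finset.sum_le_sum
            intro i _
            rw [Matrix.smul_mulVec, e2norm_smul]
            have h2 : e2norm ((E i).mulVec v) ≤ w i * b := by
              calc e2norm ((E i).mulVec v) ≤ specNorm (E i) * b := le_specNorm _ _
                _ ≤ w i * b := mul_le_mul_of_nonneg_right (hEw i) hb.le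
            calc |f i| * e2norm ((E i).mulVec v) ≤ |f i| * (w i * b) := by
                  exact mul_le_mul_of_nonneg_left h2 (abs_nonneg _)
              _ = |f i| * w i * b := by ring
        _ = S * b := by rw [hS, Finset.sum_mul]
    have hre : e2norm r ≤ |ε| * (S * b) := by
      rw [hrε, e2norm_smul, abs_neg]
      exact mul_le_mul_of_nonneg_left hNv (abs_nonneg _)
    rw [div_le_iff₀ hSb]
    linarith
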